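/- For x, s ∈ [0,1], the series ∑_{k=1}^∞ (2 sin(kπx) sin(kπs))/(π²k²) converges to min(x,s)(1 - max(x,s)), i.e., the Green's function of the 1D Poisson problem equals the sum of its spectral decomposition. -/

import Mathlib

open Real Set

lemma key_cos (t : ℝ) (ht : t ∈ Icc (0:ℝ) 1) :
    HasSum (fun n : ℕ => 1 / (n : ℝ) ^ 2 * Real.cos (2 * π * n * t))
      (π ^ 2 * (t ^ 2 - t + 1 / 6)) := by
  have h := hasSum_one_div_nat_pow_mul_cos (k := 1) one_ne_zero ht
  have hb : (Polynomial.map (algebraMap ℚ ℝ) (Polynomial.bernoulli (2 * 1))).eval t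
      = t ^ 2 - t + 1 / 6 := by
    norm_num
    simp [Polynomial.bernoulli_def, Finset.sum_range_succ, bernoulli]
    ring
  rw [hb] at h
  convert h using 2
  norm_num [Nat.factorial]
  ring

theorem green_poisson_spectral_decomposition
    (x s : ℝ) (hx : x ∈ Icc (0:ℝ) 1) (hs : s ∈ Icc (0:ℝ) 1) :
    HasSum (fun k : ℕ+ => (2 * Real.sin (k * π * x) * Real.sin (k * π * s)) / (π ^ 2 * (k:ℝ) ^ 2))
      (min x s * (1 - max x s)) := by
  obtain ⟨hx0, hx1⟩ := hx
  obtain ⟨hs0, hs1⟩ := hs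
  have hπ : π ≠ 0 := Real.pi_ne_zero
  have ha : |x - s| / 2 ∈ Icc (0:ℝ) 1 := by
    constructor
    · positivity
    · rcases abs_cases (x - s) with ⟨h, _⟩ | ⟨h, _⟩ <;> rw [h] <;> linarith
  have hb : (x + s) / 2 ∈ Icc (0:ℝ) 1 := by constructor <;> [positivity; linarith]
  have h := ((key_cos _ ha).sub (key_cos _ hb)).div_const (π ^ 2)
  rw [← Function.Injective.hasSum_iff (f := fun n : ℕ =>
      (1 / (n : ℝ) ^ 2 * Real.cos (2 * π * n * (|x - s| / 2)) -
       1 / (n : ℝ) ^ 2 * Real.cos (2 * π * n * ((x + s) / 2))) / π ^ 2)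
      (fun a b hab => PNat.coe_injective hab)] at h
  · have hval : (π ^ 2 * ((|x - s| / 2) ^ 2 - |x - s| / 2 + 1 / 6) -
        π ^ 2 * (((x + s) / 2) ^ 2 - (x + s) / 2 + 1 / 6)) / π ^ 2
        = min x s * (1 - max x s) := by
      rcases le_total x s with h' | h'
      · rw [min_eq_left h', max_eq_right h', abs_of_nonpos (by linarith)]
        field_simp
        ring
      · rw [min_eq_right h', max_eq_left h', abs_of_nonneg (by linarith)]
        field_simp
        ring
    rw [hval] at h
    convert h using 1
    · rfl
    funext k
    simp only [Function.comp_apply]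
    have e1 : 2 * π * (k : ℝ) * (|x - s| / 2) = |(k : ℝ) * π * (x - s)| := by
      rw [abs_mul, abs_of_nonneg (by positivity : (0:ℝ) ≤ (k:ℝ) * π)]
      ring
    have e2 : Real.cos (2 * π * (k : ℝ) * (|x - s| / 2))
        = Real.cos ((k : ℝ) * π * (x - s)) := by rw [e1, Real.cos_abs]
    have e3 : 2 * π * (k : ℝ) * ((x + s) / 2) = (k : ℝ) * π * (x + s) := by ring
    rw [e2, e3, ← mul_sub, Real.cos_sub_cos]
    have e4 : ((k : ℝ) * π * (x - s) + (k : ℝ) * π * (x + s)) / 2 = (k : ℝ) * π * x := by ring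
    have e5 : ((k : ℝ) * π * (x - s) - (k : ℝ) * π * (x + s)) / 2 = -((k : ℝ) * π * s) := by
      ring
    rw [e4, e5, Real.sin_neg]
    have hk : (k : ℝ) ≠ 0 := by exact_mod_cast (k : ℕ+).ne_zero
    field_simp
  · intro n hn
    have hn0 : n = 0 := by
      by_contra h0
      exact hn ⟨⟨n, Nat.pos_of_ne_zero h0⟩, rfl⟩
    simp [hn0]
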